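/- Let A₁ = [[−4, 0], [0, −5]], A₂ = [[−4, 0], [0, −10]] be 2×2 real matrices, b = (1, 1), c₁ = (1, 1), c₂ = (1, 2) ∈ ℝ². Then there exist initial states x₁, x₂ ∈ ℝ² such that for all t ≥ 0, c₁ · (exp(tA₁)·x₁ + ∫₀ᵗ exp(sA₁)·b ds) = c₂ · (exp(tA₂)·x₂ + ∫₀ᵗ exp(sA₂)·b ds). -/

import Mathlib

open Matrix

lemma integ_exp_mul' (c t : ℝ) (hc : c ≠ 0) :
    ∫ s in (0:ℝ)..t, Real.exp (s * c) = c⁻¹ * (Real.exp (t * c) - 1) := by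
  rw [intervalIntegral.integral_comp_mul_right Real.exp hc]
  simp [integral_exp, smul_eq_mul]

lemma exp_smul_diag' (d : Fin 2 → ℝ) (s : ℝ) :
    NormedSpace.exp (s • Matrix.diagonal d)
      = Matrix.diagonal (fun i => Real.exp (s * d i)) := by
  rw [← Matrix.diagonal_smul, Matrix.exp_diagonal]
  funext i j
  rw [Pi.exp_def]
  simp [← Real.exp_eq_exp_ℝ, smul_eq_mul, Matrix.diagonal]

lemma integ_apply' {f : ℝ → Fin 2 → ℝ} (hf : Continuous f) (t : ℝ) (i : Fin 2) :
    (∫ s in (0:ℝ)..t, f s) i = ∫ s in (0:ℝ)..t, f s i :=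
  ((ContinuousLinearMap.proj (R := ℝ) (φ := fun _ : Fin 2 => ℝ) i).intervalIntegral_comp_comm
    (hf.intervalIntegrable _ _)).symm

lemma output_eq (d : Fin 2 → ℝ) (hd0 : d 0 ≠ 0) (hd1 : d 1 ≠ 0) (x c : Fin 2 → ℝ) (t : ℝ) :
    c ⬝ᵥ (NormedSpace.exp (t • Matrix.diagonal d) *ᵥ x
        + ∫ s in (0:ℝ)..t, NormedSpace.exp (s • Matrix.diagonal d) *ᵥ ![1, 1])
      = c 0 * (Real.exp (t * d 0) * x 0 + (d 0)⁻¹ * (Real.exp (t * d 0) - 1))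
        + c 1 * (Real.exp (t * d 1) * x 1 + (d 1)⁻¹ * (Real.exp (t * d 1) - 1)) := by
  have hone : (![1, 1] : Fin 2 → ℝ) = fun _ => 1 := by
    funext i; fin_cases i <;> rfl
  have hmv : ∀ s : ℝ, NormedSpace.exp (s • Matrix.diagonal d) *ᵥ ![1, 1]
      = fun i => Real.exp (s * d i) := by
    intro s; funext i
    rw [exp_smul_diag', Matrix.mulVec_diagonal, hone, mul_one]
  have hcont : Continuous fun s : ℝ => (fun i => Real.exp (s * d i) : Fin 2 → ℝ) :=
    continuous_pi fun i => Real.continuous_exp.comp (continuous_id.mul continuous_const)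
  have hI : (∫ s in (0:ℝ)..t, NormedSpace.exp (s • Matrix.diagonal d) *ᵥ ![1, 1])
      = fun i => (d i)⁻¹ * (Real.exp (t * d i) - 1) := by
    simp_rw [hmv]
    funext i
    rw [integ_apply' hcont t i]
    rcases (by omega : i = 0 ∨ i = 1) with h | h <;> subst h
    · exact integ_exp_mul' _ t hd0
    · exact integ_exp_mul' _ t hd1
  rw [hI]
  simp [dotProduct, Fin.sum_univ_two, exp_smul_diag', Matrix.mulVec_diagonal]

theorem stmt12 :
    ∃ x₁ x₂ : Fin 2 → ℝ, ∀ t : ℝ, 0 ≤ t →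
      (![1, 1] : Fin 2 → ℝ) ⬝ᵥ
          (NormedSpace.exp (t • (!![-4, 0; 0, -5] : Matrix (Fin 2) (Fin 2) ℝ)) *ᵥ x₁
            + ∫ s in (0 : ℝ)..t,
                NormedSpace.exp (s • (!![-4, 0; 0, -5] : Matrix (Fin 2) (Fin 2) ℝ)) *ᵥ ![1, 1])
        = (![1, 2] : Fin 2 → ℝ) ⬝ᵥ
            (NormedSpace.exp (t • (!![-4, 0; 0, -10] : Matrix (Fin 2) (Fin 2) ℝ)) *ᵥ x₂
              + ∫ s in (0 : ℝ)..t,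
                  NormedSpace.exp (s • (!![-4, 0; 0, -10] : Matrix (Fin 2) (Fin 2) ℝ)) *ᵥ ![1, 1]) := by
  have hA1 : (!![-4, 0; 0, -5] : Matrix (Fin 2) (Fin 2) ℝ) = Matrix.diagonal ![-4, -5] := by
    funext i j; fin_cases i <;> fin_cases j <;> simp [Matrix.diagonal]
  have hA2 : (!![-4, 0; 0, -10] : Matrix (Fin 2) (Fin 2) ℝ) = Matrix.diagonal ![-4, -10] := by
    funext i j; fin_cases i <;> fin_cases j <;> simp [Matrix.diagonal]
  refine ⟨![1/4, 1/5], ![1/4, 1/10], fun t _ => ?_⟩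
  rw [hA1, hA2,
    output_eq ![-4, -5] (by norm_num) (by norm_num) ![1/4, 1/5] ![1, 1] t,
    output_eq ![-4, -10] (by norm_num) (by norm_num) ![1/4, 1/10] ![1, 2] t]
  norm_num
  ring
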